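/- Fix $k \ge 1$ and let $v \in V$ be a simple vector. Writing $M(q,z_1,z_2)$ for the pentagon transfer matrix, one has the decomposition $M(q,z_1,z_2) v(q,z_1,qz_2) = ((A+B+C+D+E)v)(q,z_1,z_2)$, where $A,B,C,D,E$ are the extremal operators defined below, provided all of $A v, Bv, Cv, Dv, Ev$ are defined. -/

import Mathlib

namespace Extremal

/-- The field of rational functions in `q, z₁, z₂` over `ℚ`. -/
abbrev F := FractionRing (MvPolynomial (Fin 3) ℚ)

noncomputable def qF : F := algebraMap (MvPolynomial (Fin 3) ℚ) F (MvPolynomial.X 0)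
noncomputable def z1F : F := algebraMap (MvPolynomial (Fin 3) ℚ) F (MvPolynomial.X 1)
noncomputable def z2F : F := algebraMap (MvPolynomial (Fin 3) ℚ) F (MvPolynomial.X 2)

/-- The monomial `q^a z₁^b z₂^c`. -/
noncomputable def mono (a b c : ℕ) : F := qF ^ a * z1F ^ b * z2F ^ c

/-- The entry `M_{i,l}^{i',l'}` of `M(q,z₁,z₂)` as a rational function
(inequalities written additively to avoid truncated subtraction). -/
noncomputable def Ment (k i l i' l' : ℕ) : F :=
  if l ≤ i' + i ∧ i' ≤ l' ∧ l' + i ≤ k then (qF * z1F * z2F) ^ (l' - i') * z2F ^ i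
  else if i' + i < l ∧ l ≤ l' + i ∧ l' + i ≤ k then (qF * z1F * z2F) ^ (l' + i - l) * z2F ^ i
  else 0

section Aux
variable {K : Type*} [Field K]

private lemma geom_aux {a b : K} (h : a ≠ b) (n : ℕ) :
    ∑ j ∈ Finset.range (n+1), a ^ j * b ^ (n - j) = (a ^ (n+1) - b ^ (n+1)) / (a - b) := by
  rw [eq_div_iff (sub_ne_zero.2 h), ← geom_sum₂_mul a b (n+1)]
  simp only [Nat.add_sub_cancel]


private lemma core_sum (x y r w : K) (hux : w*y ≠ x)
    (hry : r ≠ y) (hru : r ≠ w*y) (hrx : r ≠ x) (m n : ℕ) :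
    ∑ i' ∈ Finset.range (m+n+1), ∑ l' ∈ Finset.range (m+n+1),
      (if m ≤ i' ∧ i' ≤ l' then w ^ (l'-i')
       else if i' < m ∧ m ≤ l' then w ^ (l'-m) else 0)
       * (x ^ (m+n-l') * y ^ (l'-i') * r ^ i')
    = ( r^m * (w*y) * (r^(n+1) - (w*y)^(n+1)) / (r - (w*y))
      - r^m * x * (r^(n+1) - x^(n+1)) / (r - x)
      + ((w*y)^(n+1) - x^(n+1)) * (y * ((r^m - y^m) / (r - y))) ) / (w*y - x) := by
  have hpart1 : ∑ i' ∈ Finset.range m, ∑ l' ∈ Finset.range (m+n+1),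
      (if m ≤ i' ∧ i' ≤ l' then w ^ (l'-i')
       else if i' < m ∧ m ≤ l' then w ^ (l'-m) else 0)
       * (x ^ (m+n-l') * y ^ (l'-i') * r ^ i')
      = ((r^m - y^m)/(r-y)) * (y * (((w*y)^(n+1) - x^(n+1))/(w*y-x))) := by
    have h1 : ∀ i' ∈ Finset.range m, (∑ l' ∈ Finset.range (m+n+1),
        (if m ≤ i' ∧ i' ≤ l' then w ^ (l'-i')
         else if i' < m ∧ m ≤ l' then w ^ (l'-m) else 0)
         * (x ^ (m+n-l') * y ^ (l'-i') * r ^ i'))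
        = (r^i' * y^(m-1-i')) * (y * (((w*y)^(n+1) - x^(n+1))/(w*y-x))) := by
      intro i' hi'
      simp only [Finset.mem_range] at hi'
      have hz : ∑ l' ∈ Finset.range m,
          (if m ≤ i' ∧ i' ≤ l' then w ^ (l'-i')
           else if i' < m ∧ m ≤ l' then w ^ (l'-m) else 0)
           * (x ^ (m+n-l') * y ^ (l'-i') * r ^ i') = 0 :=
        Finset.sum_eq_zero fun l' hl' => by
          simp only [Finset.mem_range] at hl'
          rw [if_neg (show ¬(m ≤ i' ∧ i' ≤ l') from by omega),
              if_neg (show ¬(i' < m ∧ m ≤ l') from by omega), zero_mul]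
      have hpt : ∀ j ∈ Finset.range (n+1),
          (if m ≤ i' ∧ i' ≤ m+j then w ^ (m+j-i')
           else if i' < m ∧ m ≤ m+j then w ^ (m+j-m) else 0)
           * (x ^ (m+n-(m+j)) * y ^ (m+j-i') * r ^ i')
          = (r^i' * y^(m-1-i') * y) * ((w*y)^j * x^(n-j)) := by
        intro j hj
        simp only [Finset.mem_range] at hj
        rw [if_neg (show ¬(m ≤ i' ∧ i' ≤ m+j) from by omega),
            if_pos (show i' < m ∧ m ≤ m+j from by omega),
            show m+j-m = j from by omega, show m+n-(m+j) = n-j from by omega,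
            show m+j-i' = (m-1-i') + (j+1) from by omega, pow_add]
        ring
      calc (∑ l' ∈ Finset.range (m+n+1),
          (if m ≤ i' ∧ i' ≤ l' then w ^ (l'-i')
           else if i' < m ∧ m ≤ l' then w ^ (l'-m) else 0)
           * (x ^ (m+n-l') * y ^ (l'-i') * r ^ i'))
          = (∑ l' ∈ Finset.range m,
              (if m ≤ i' ∧ i' ≤ l' then w ^ (l'-i')
               else if i' < m ∧ m ≤ l' then w ^ (l'-m) else 0)
               * (x ^ (m+n-l') * y ^ (l'-i') * r ^ i'))
            + ∑ j ∈ Finset.range (n+1),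
              (if m ≤ i' ∧ i' ≤ m+j then w ^ (m+j-i')
               else if i' < m ∧ m ≤ m+j then w ^ (m+j-m) else 0)
               * (x ^ (m+n-(m+j)) * y ^ (m+j-i') * r ^ i') :=
            Finset.sum_range_add _ m (n+1)
        _ = 0 + ∑ j ∈ Finset.range (n+1),
              (r^i' * y^(m-1-i') * y) * ((w*y)^j * x^(n-j)) :=
            congrArg₂ (· + ·) hz (Finset.sum_congr rfl hpt)
        _ = (r^i' * y^(m-1-i')) * (y * (((w*y)^(n+1) - x^(n+1))/(w*y-x))) := by
            rw [zero_add, ← Finset.mul_sum, geom_aux hux n]; ring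
    have h2 : (∑ i' ∈ Finset.range m, r^i' * y^(m-1-i')) = (r^m - y^m)/(r-y) := by
      rw [eq_div_iff (sub_ne_zero.2 hry)]; exact geom_sum₂_mul r y m
    calc (∑ i' ∈ Finset.range m, ∑ l' ∈ Finset.range (m+n+1),
        (if m ≤ i' ∧ i' ≤ l' then w ^ (l'-i')
         else if i' < m ∧ m ≤ l' then w ^ (l'-m) else 0)
         * (x ^ (m+n-l') * y ^ (l'-i') * r ^ i'))
        = ∑ i' ∈ Finset.range m,
            (r^i' * y^(m-1-i')) * (y * (((w*y)^(n+1) - x^(n+1))/(w*y-x))) :=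
          Finset.sum_congr rfl h1
      _ = (∑ i' ∈ Finset.range m, r^i' * y^(m-1-i'))
            * (y * (((w*y)^(n+1) - x^(n+1))/(w*y-x))) := (Finset.sum_mul _ _ _).symm
      _ = ((r^m - y^m)/(r-y)) * (y * (((w*y)^(n+1) - x^(n+1))/(w*y-x))) := by rw [h2]
  have hpart2 : ∑ s ∈ Finset.range (n+1), ∑ l' ∈ Finset.range (m+n+1),
      (if m ≤ m+s ∧ m+s ≤ l' then w ^ (l'-(m+s))
       else if m+s < m ∧ m ≤ l' then w ^ (l'-m) else 0)
       * (x ^ (m+n-l') * y ^ (l'-(m+s)) * r ^ (m+s))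
      = ((r^(n+1) - (w*y)^(n+1))/(r - (w*y))) * ((w*y)*(r^m/(w*y-x)))
        - ((r^(n+1) - x^(n+1))/(r-x)) * (x*(r^m/(w*y-x))) := by
    have h2 : ∀ s ∈ Finset.range (n+1), (∑ l' ∈ Finset.range (m+n+1),
        (if m ≤ m+s ∧ m+s ≤ l' then w ^ (l'-(m+s))
         else if m+s < m ∧ m ≤ l' then w ^ (l'-m) else 0)
         * (x ^ (m+n-l') * y ^ (l'-(m+s)) * r ^ (m+s)))
        = (r^s*(w*y)^(n-s)) * ((w*y)*(r^m/(w*y-x)))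
          - (r^s*x^(n-s)) * (x*(r^m/(w*y-x))) := by
      intro s hs
      simp only [Finset.mem_range] at hs
      have hz2 : ∑ l' ∈ Finset.range (m+s),
          (if m ≤ m+s ∧ m+s ≤ l' then w ^ (l'-(m+s))
           else if m+s < m ∧ m ≤ l' then w ^ (l'-m) else 0)
           * (x ^ (m+n-l') * y ^ (l'-(m+s)) * r ^ (m+s)) = 0 :=
        Finset.sum_eq_zero fun l' hl' => by
          simp only [Finset.mem_range] at hl'
          rw [if_neg (show ¬(m ≤ m+s ∧ m+s ≤ l') from by omega),
              if_neg (show ¬(m+s < m ∧ m ≤ l') from by omega), zero_mul]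
      have hpt2 : ∀ j ∈ Finset.range ((n-s)+1),
          (if m ≤ m+s ∧ m+s ≤ m+s+j then w ^ (m+s+j-(m+s))
           else if m+s < m ∧ m ≤ m+s+j then w ^ (m+s+j-m) else 0)
           * (x ^ (m+n-(m+s+j)) * y ^ (m+s+j-(m+s)) * r ^ (m+s))
          = (r^m*r^s) * ((w*y)^j * x^((n-s)-j)) := by
        intro j hj
        simp only [Finset.mem_range] at hj
        rw [if_pos (show m ≤ m+s ∧ m+s ≤ m+s+j from by omega),
            show m+s+j-(m+s) = j from by omega,
            show m+n-(m+s+j) = (n-s)-j from by omega, pow_add]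
        ring
      calc (∑ l' ∈ Finset.range (m+n+1),
          (if m ≤ m+s ∧ m+s ≤ l' then w ^ (l'-(m+s))
           else if m+s < m ∧ m ≤ l' then w ^ (l'-m) else 0)
           * (x ^ (m+n-l') * y ^ (l'-(m+s)) * r ^ (m+s)))
          = ∑ l' ∈ Finset.range ((m+s)+((n-s)+1)),
            (if m ≤ m+s ∧ m+s ≤ l' then w ^ (l'-(m+s))
             else if m+s < m ∧ m ≤ l' then w ^ (l'-m) else 0)
             * (x ^ (m+n-l') * y ^ (l'-(m+s)) * r ^ (m+s)) := by
            rw [show (m+s)+((n-s)+1) = m+n+1 from by omega]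
        _ = (∑ l' ∈ Finset.range (m+s),
            (if m ≤ m+s ∧ m+s ≤ l' then w ^ (l'-(m+s))
             else if m+s < m ∧ m ≤ l' then w ^ (l'-m) else 0)
             * (x ^ (m+n-l') * y ^ (l'-(m+s)) * r ^ (m+s)))
            + ∑ j ∈ Finset.range ((n-s)+1),
              (if m ≤ m+s ∧ m+s ≤ m+s+j then w ^ (m+s+j-(m+s))
               else if m+s < m ∧ m ≤ m+s+j then w ^ (m+s+j-m) else 0)
               * (x ^ (m+n-(m+s+j)) * y ^ (m+s+j-(m+s)) * r ^ (m+s)) :=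
            Finset.sum_range_add _ (m+s) ((n-s)+1)
        _ = 0 + ∑ j ∈ Finset.range ((n-s)+1), (r^m*r^s) * ((w*y)^j * x^((n-s)-j)) :=
            congrArg₂ (· + ·) hz2 (Finset.sum_congr rfl hpt2)
        _ = (r^s*(w*y)^(n-s)) * ((w*y)*(r^m/(w*y-x)))
            - (r^s*x^(n-s)) * (x*(r^m/(w*y-x))) := by
            rw [zero_add, ← Finset.mul_sum, geom_aux hux (n-s)]; ring
    have hg1 : (∑ s ∈ Finset.range (n+1), r^s*(w*y)^(n-s))
        = (r^(n+1) - (w*y)^(n+1))/(r - (w*y)) := geom_aux hru n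
    have hg2 : (∑ s ∈ Finset.range (n+1), r^s*x^(n-s))
        = (r^(n+1) - x^(n+1))/(r - x) := geom_aux hrx n
    calc (∑ s ∈ Finset.range (n+1), ∑ l' ∈ Finset.range (m+n+1),
        (if m ≤ m+s ∧ m+s ≤ l' then w ^ (l'-(m+s))
         else if m+s < m ∧ m ≤ l' then w ^ (l'-m) else 0)
         * (x ^ (m+n-l') * y ^ (l'-(m+s)) * r ^ (m+s)))
        = ∑ s ∈ Finset.range (n+1),
            ((r^s*(w*y)^(n-s)) * ((w*y)*(r^m/(w*y-x)))
             - (r^s*x^(n-s)) * (x*(r^m/(w*y-x)))) := Finset.sum_congr rfl h2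
      _ = (∑ s ∈ Finset.range (n+1), r^s*(w*y)^(n-s)) * ((w*y)*(r^m/(w*y-x)))
          - (∑ s ∈ Finset.range (n+1), r^s*x^(n-s)) * (x*(r^m/(w*y-x))) := by
          rw [Finset.sum_sub_distrib, Finset.sum_mul, Finset.sum_mul]
      _ = ((r^(n+1) - (w*y)^(n+1))/(r - (w*y))) * ((w*y)*(r^m/(w*y-x)))
          - ((r^(n+1) - x^(n+1))/(r-x)) * (x*(r^m/(w*y-x))) := by rw [hg1, hg2]
  refine ((Finset.sum_range_add _ m (n+1)).trans ?_)
  refine (congrArg₂ (· + ·) hpart1 hpart2).trans ?_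
  ring

set_option maxHeartbeats 1000000 in
private lemma final_aux (x y r w z2 : K)
    (hx : x ≠ 0) (hy : y ≠ 0) (hr : r ≠ 0) (hw : w ≠ 0)
    (hux : w*y ≠ x) (hry : r ≠ y) (hrx : r ≠ x) (hru : r ≠ w*y) (m n i : ℕ) :
    z2^i * x^i * (( r^m * (w*y) * (r^(n+1) - (w*y)^(n+1)) / (r - (w*y))
      - r^m * x * (r^(n+1) - x^(n+1)) / (r - x)
      + ((w*y)^(n+1) - x^(n+1)) * (y * ((r^m - y^m) / (r - y))) ) / (w*y - x))
    = x ^ n * y ^ m * (z2 * x) ^ i / ((1 - w*y / x) * (1 - r / y))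
    + (1 - y / x) * x ^ n * r ^ m * (z2 * x) ^ i / ((1 - w*y / x) * (1 - y / r) * (1 - r / x))
    + (w*y) ^ n * y ^ m * (z2 * x) ^ i / ((1 - x / (w*y)) * (1 - r / y))
    + (1 - w⁻¹) * (w*y) ^ n * r ^ m * (z2 * x) ^ i /
        ((1 - x / (w*y)) * (1 - r / (w*y)) * (1 - y / r))
    + r ^ n * r ^ m * (z2 * x) ^ i / ((1 - w*y / r) * (1 - x / r)) := by
  have hwy : w*y ≠ 0 := mul_ne_zero hw hy
  have d1 : x - w*y ≠ 0 := sub_ne_zero.2 (Ne.symm hux)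
  have d2 : w*y - x ≠ 0 := sub_ne_zero.2 hux
  have d3 : r - y ≠ 0 := sub_ne_zero.2 hry
  have d4 : y - r ≠ 0 := sub_ne_zero.2 (Ne.symm hry)
  have d5 : r - x ≠ 0 := sub_ne_zero.2 hrx
  have d6 : x - r ≠ 0 := sub_ne_zero.2 (Ne.symm hrx)
  have d7 : r - w*y ≠ 0 := sub_ne_zero.2 hru
  have d8 : w*y - r ≠ 0 := sub_ne_zero.2 (Ne.symm hru)
  have hPy0 : ((x^(n+1)-(w*y)^(n+1))*(y*y^m))/(w*y-x)/(r-y)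
      = x^n*y^m/((1 - w*y/x)*(1 - r/y)) + (w*y)^n*y^m/((1 - x/(w*y))*(1 - r/y)) := by
    field_simp
    ring
  have hPx0 : r^m*x*x^(n+1)/(r-x)/(w*y-x) - r^m*y*x^(n+1)/(r-y)/(w*y-x)
      = (1 - y/x)*x^n*r^m/((1 - w*y/x)*(1 - y/r)*(1 - r/x)) := by
    field_simp
    ring
  have hPu0 : r^m*y*(w*y)^(n+1)/(r-y)/(w*y-x) - r^m*(w*y)*(w*y)^(n+1)/(r-w*y)/(w*y-x)
      = (1 - w⁻¹)*(w*y)^n*r^m/((1 - x/(w*y))*(1 - r/(w*y))*(1 - y/r)) := by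
    have e1 : (1:K) - x/(w*y) = (w*y-x)/(w*y) := by field_simp
    have e2 : (1:K) - r/(w*y) = (w*y-r)/(w*y) := by field_simp
    have e3 : (1:K) - y/r = (r-y)/r := by field_simp
    have e4 : (1:K) - w⁻¹ = (w-1)/w := by field_simp
    rw [e1, e2, e3, e4, div_div, div_div, div_sub_div _ _ (mul_ne_zero d3 d2) (mul_ne_zero d7 d2)]
    rw [div_eq_div_iff (mul_ne_zero (mul_ne_zero d3 d2) (mul_ne_zero d7 d2))
      (mul_ne_zero (mul_ne_zero (div_ne_zero d2 hwy) (div_ne_zero d8 hwy)) (div_ne_zero d3 hr))]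
    field_simp
    ring
  have hPr0 : r^m*(w*y)*r^(n+1)/(r-w*y)/(w*y-x) - r^m*x*r^(n+1)/(r-x)/(w*y-x)
      = r^n*r^m/((1 - w*y/r)*(1 - x/r)) := by
    field_simp
    ring
  rw [← mul_pow]
  trans ((z2*x)^i * (((x^(n+1)-(w*y)^(n+1))*(y*y^m))/(w*y-x)/(r-y))
       + (z2*x)^i * (r^m*x*x^(n+1)/(r-x)/(w*y-x) - r^m*y*x^(n+1)/(r-y)/(w*y-x))
       + (z2*x)^i * (r^m*y*(w*y)^(n+1)/(r-y)/(w*y-x) - r^m*(w*y)*(w*y)^(n+1)/(r-w*y)/(w*y-x))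
       + (z2*x)^i * (r^m*(w*y)*r^(n+1)/(r-w*y)/(w*y-x) - r^m*x*r^(n+1)/(r-x)/(w*y-x)))
  · ring
  · rw [hPy0, hPx0, hPu0, hPr0]; ring

end Aux

/-- Decomposition of the pentagon transfer matrix through the extremal operators
`A,B,C,D,E`: for a simple vector `v = f·[P,Q,R]` with monomial entries
`P = q^{pa} z₁^{pb} z₂^{pc}` etc., the `(i,l)`-component of
`M(q,z₁,z₂) v(q,z₁,qz₂)` equals the sum of the `(i,l)`-components of
`Av, Bv, Cv, Dv, Ev` — all expressions written after applying the shift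
`S : z₂ ↦ qz₂` (so `SP = q^{pa+pc} z₁^{pb} z₂^{pc}` is the shift of `P`, and
`g` stands for the shifted scalar part `S f`).  The hypotheses say that the
denominators occurring in the extremal operators do not vanish, i.e. that
`Av,…,Ev` are all defined. -/


theorem pentagon_decomposition (k : ℕ) (hk : 1 ≤ k)
    (pa pb pc qa qb qc ra rb rc : ℕ) (g : F) :
    let SP : F := mono (pa + pc) pb pc
    let SQ : F := mono (qa + qc) qb qc
    let SR : F := mono (ra + rc) rb rc
    let ZQ : F := z1F * (qF * z2F) * SQ   -- the shift of z₁z₂Q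
    ∀ _h1 : ZQ ≠ SP, ∀ _h2 : SR ≠ SQ, ∀ _h3 : SR ≠ SP, ∀ _h4 : ZQ ≠ SR,
    ∀ i l : ℕ, i ≤ l → l ≤ k →
    g * (∑ i' ∈ Finset.range (k + 1), ∑ l' ∈ Finset.range (k + 1),
          Ment k i l i' l' * SP ^ (k - l') * SQ ^ (l' - i') * SR ^ i') =
    g * (SP ^ (k - l) * SQ ^ (l - i) * (z2F * SP) ^ i /
            ((1 - ZQ / SP) * (1 - SR / SQ))
        + (1 - SQ / SP) * SP ^ (k - l) * SR ^ (l - i) * (z2F * SP) ^ i /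
            ((1 - ZQ / SP) * (1 - SQ / SR) * (1 - SR / SP))
        + ZQ ^ (k - l) * SQ ^ (l - i) * (z2F * SP) ^ i /
            ((1 - SP / ZQ) * (1 - SR / SQ))
        + (1 - (z1F * (qF * z2F))⁻¹) * ZQ ^ (k - l) * SR ^ (l - i) * (z2F * SP) ^ i /
            ((1 - SP / ZQ) * (1 - SR / ZQ) * (1 - SQ / SR))
        + SR ^ (k - l) * SR ^ (l - i) * (z2F * SP) ^ i /
            ((1 - ZQ / SR) * (1 - SP / SR))) := by
  intro SP SQ SR ZQ h1 h2 h3 h4 i l hil hlk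
  have hZQ0 : ZQ = z1F * (qF * z2F) * SQ := rfl
  have hZQ : ZQ = qF * z1F * z2F * SQ := hZQ0.trans (by ring)
  have hw' : z1F * (qF * z2F) = qF * z1F * z2F := by ring
  have hq : qF ≠ 0 := fun h => (MvPolynomial.X_ne_zero (R := ℚ) 0)
    (IsFractionRing.to_map_eq_zero_iff.mp h)
  have hz1 : z1F ≠ 0 := fun h => (MvPolynomial.X_ne_zero (R := ℚ) 1)
    (IsFractionRing.to_map_eq_zero_iff.mp h)
  have hz2 : z2F ≠ 0 := fun h => (MvPolynomial.X_ne_zero (R := ℚ) 2)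
    (IsFractionRing.to_map_eq_zero_iff.mp h)
  have hmono : ∀ a b c : ℕ, mono a b c ≠ 0 := fun a b c =>
    mul_ne_zero (mul_ne_zero (pow_ne_zero _ hq) (pow_ne_zero _ hz1)) (pow_ne_zero _ hz2)
  have hSP : SP ≠ 0 := hmono (pa + pc) pb pc
  have hSQ : SQ ≠ 0 := hmono (qa + qc) qb qc
  have hSR : SR ≠ 0 := hmono (ra + rc) rb rc
  have hw : qF * z1F * z2F ≠ 0 := mul_ne_zero (mul_ne_zero hq hz1) hz2
  have hux : qF * z1F * z2F * SQ ≠ SP := by rw [← hZQ]; exact h1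
  have hru : SR ≠ qF * z1F * z2F * SQ := by rw [← hZQ]; exact h4.symm
  have hMzero : ∀ i' l' : ℕ, k - i < i' ∨ k - i < l' → Ment k i l i' l' = 0 := by
    intro i' l' h
    unfold Ment
    rw [if_neg (show ¬(l ≤ i' + i ∧ i' ≤ l' ∧ l' + i ≤ k) from by omega),
        if_neg (show ¬(i' + i < l ∧ l ≤ l' + i ∧ l' + i ≤ k) from by omega)]
  have hsum : (∑ i' ∈ Finset.range (k + 1), ∑ l' ∈ Finset.range (k + 1),
        Ment k i l i' l' * SP ^ (k - l') * SQ ^ (l' - i') * SR ^ i')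
      = z2F ^ i * SP ^ i * (∑ i' ∈ Finset.range (l - i + (k - l) + 1),
          ∑ l' ∈ Finset.range (l - i + (k - l) + 1),
          (if l - i ≤ i' ∧ i' ≤ l' then (qF * z1F * z2F) ^ (l' - i')
           else if i' < l - i ∧ l - i ≤ l' then (qF * z1F * z2F) ^ (l' - (l - i)) else 0)
           * (SP ^ (l - i + (k - l) - l') * SQ ^ (l' - i') * SR ^ i')) := by
    rw [show l - i + (k - l) = k - i from by omega]
    calc (∑ i' ∈ Finset.range (k + 1), ∑ l' ∈ Finset.range (k + 1),
          Ment k i l i' l' * SP ^ (k - l') * SQ ^ (l' - i') * SR ^ i')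
        = ∑ i' ∈ Finset.range (k + 1), ∑ l' ∈ Finset.range (k - i + 1),
          Ment k i l i' l' * SP ^ (k - l') * SQ ^ (l' - i') * SR ^ i' :=
          Finset.sum_congr rfl fun i' _ =>
            (Finset.sum_subset (Finset.range_subset_range.2 (by omega))
              (fun l' _ hl' => by
                simp only [Finset.mem_range, not_lt] at hl'
                rw [hMzero i' l' (Or.inr (by omega)), zero_mul, zero_mul, zero_mul])).symm
      _ = ∑ i' ∈ Finset.range (k - i + 1), ∑ l' ∈ Finset.range (k - i + 1),
          Ment k i l i' l' * SP ^ (k - l') * SQ ^ (l' - i') * SR ^ i' :=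
          (Finset.sum_subset (Finset.range_subset_range.2 (by omega))
            (fun i' _ hi' => Finset.sum_eq_zero fun l' _ => by
              simp only [Finset.mem_range, not_lt] at hi'
              rw [hMzero i' l' (Or.inl (by omega)), zero_mul, zero_mul, zero_mul])).symm
      _ = ∑ i' ∈ Finset.range (k - i + 1), ∑ l' ∈ Finset.range (k - i + 1),
          z2F ^ i * SP ^ i *
          ((if l - i ≤ i' ∧ i' ≤ l' then (qF * z1F * z2F) ^ (l' - i')
            else if i' < l - i ∧ l - i ≤ l' then (qF * z1F * z2F) ^ (l' - (l - i)) else 0)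
            * (SP ^ (k - i - l') * SQ ^ (l' - i') * SR ^ i')) := by
          refine Finset.sum_congr rfl fun i' hi' => Finset.sum_congr rfl fun l' hl' => ?_
          simp only [Finset.mem_range] at hi' hl'
          unfold Ment
          by_cases hA : l - i ≤ i' ∧ i' ≤ l'
          · rw [if_pos (show l ≤ i' + i ∧ i' ≤ l' ∧ l' + i ≤ k from by omega), if_pos hA,
                show k - l' = (k - i - l') + i from by omega, pow_add]
            ring
          · by_cases hB : i' < l - i ∧ l - i ≤ l'
            · rw [if_neg (show ¬(l ≤ i' + i ∧ i' ≤ l' ∧ l' + i ≤ k) from by omega),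
                  if_pos (show i' + i < l ∧ l ≤ l' + i ∧ l' + i ≤ k from by omega),
                  if_neg hA, if_pos hB,
                  show l' + i - l = l' - (l - i) from by omega,
                  show k - l' = (k - i - l') + i from by omega, pow_add]
              ring
            · rw [if_neg (show ¬(l ≤ i' + i ∧ i' ≤ l' ∧ l' + i ≤ k) from by omega),
                  if_neg (show ¬(i' + i < l ∧ l ≤ l' + i ∧ l' + i ≤ k) from by omega),
                  if_neg hA, if_neg hB]
              ring
      _ = z2F ^ i * SP ^ i * (∑ i' ∈ Finset.range (k - i + 1),
            ∑ l' ∈ Finset.range (k - i + 1),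
            (if l - i ≤ i' ∧ i' ≤ l' then (qF * z1F * z2F) ^ (l' - i')
             else if i' < l - i ∧ l - i ≤ l' then (qF * z1F * z2F) ^ (l' - (l - i)) else 0)
             * (SP ^ (k - i - l') * SQ ^ (l' - i') * SR ^ i')) := by
          simp only [← Finset.mul_sum]
  have hcs := core_sum SP SQ SR (qF * z1F * z2F) hux h2 hru h3 (l - i) (k - l)
  rw [hZQ, hw']
  refine congrArg (g * ·) ?_
  rw [hsum, hcs]
  exact final_aux SP SQ SR (qF * z1F * z2F) z2F hSP hSQ hSR hw hux h2 h3 hru (l - i) (k - l) i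


end Extremal
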